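/- arXiv:2308.10676 — 2 statements merged into one kernel-verified Lean document; each statement's English description precedes it below -/
import Mathlib

section
/- Let (Σ_C,P_C) be a Kelvin–Planck conjunction of the Kelvin–Planck theories (Σ_Θ,P_Θ) and (Σ,P), where Σ and Σ_Θ are disjoint. Suppose: (i) Σ_Θ is connected; (ii) any two states, one in Σ and the other in Σ_Θ, that are not of the same hotness in (Σ_C,P_C) are comparable under the weakly-hotter-than relation of (Σ_C,P_C); (iii) for each σ ∈ Σ there is a state σ_θ ∈ Σ_Θ that is weakly hotter than σ in (Σ_C,P_C) and also a state σ'_θ ∈ Σ_Θ such that σ is weakly hotter than σ'_θ in (Σ_C,P_C). Then (Σ_Θ,P_Θ) is a thermometer for (Σ,P): for each σ ∈ Σ there is σ_θ ∈ Σ_Θ such that both (0, δ_σ − δ_{σ_θ}) and its negative are members of \hat{P_C}. -/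
open Set

noncomputable section

/-- Signed regular Borel measures on `X`, modeled via the Riesz representation
theorem as the weak-star dual of `C(X, ℝ)`. -/
abbrev Meas (X : Type*) [TopologicalSpace X] := WeakDual ℝ C(X, ℝ)

/-- The ambient space containing `V(X) = M°(X) ⊕ M(X)`; membership in the
subspace `M°(X)` of the first component is expressed by `p.1 1 = 0`. -/
abbrev VSp (X : Type*) [TopologicalSpace X] := Meas X × Meas X

/-- The cone of nonnegative measures. -/
def PosMeas (X : Type*) [TopologicalSpace X] : Set (Meas X) :=
  {μ | ∀ f : C(X, ℝ), (∀ x, 0 ≤ f x) → 0 ≤ μ f}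

variable {X : Type*} [TopologicalSpace X]

/-- The Dirac measure at a point, i.e. the evaluation functional. -/
def dirac (x : X) : Meas X :=
  (⟨⟨⟨fun f => f x, fun _ _ => rfl⟩, fun _ _ => rfl⟩,
    continuous_eval_const x⟩ : C(X, ℝ) →L[ℝ] ℝ)

/-- The set of nonnegative multiples of members of `P`. -/
def coneOf (P : Set (VSp X)) : Set (VSp X) :=
  {x | ∃ c : ℝ, 0 ≤ c ∧ ∃ p ∈ P, x = c • p}

/-- `\hat P`, the weak-star closure of the cone generated by `P`. -/
def hatP (P : Set (VSp X)) : Set (VSp X) :=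
  closure (coneOf P)

/-- A thermodynamical theory: processes have change of condition with total mass
zero (i.e. `P ⊆ V(X)`), and `\hat P` is convex. -/
def IsThermoTheory (P : Set (VSp X)) : Prop :=
  (∀ p ∈ P, p.1 (1 : C(X, ℝ)) = 0) ∧ Convex ℝ (hatP P)

/-- A Kelvin–Planck theory: a thermodynamical theory with
`\hat P ∩ ({0} × M₊(X)) = {(0,0)}`. -/
def IsKelvinPlanck (P : Set (VSp X)) : Prop :=
  IsThermoTheory P ∧ hatP P ∩ (({0} : Set (Meas X)) ×ˢ PosMeas X) = {(0, 0)}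

/-- A Clausius–Duhem pair `(η, T)` for the theory `P`: `η` and `T` are continuous,
`T` is strictly positive, and for every continuous `β` equal pointwise to `1/T`
(such a `β` exists, and is unique, by positivity of `T`), the Clausius–Duhem
inequality `∫ η d(Δm) ≥ ∫ (1/T) dq` holds for every process in `P`. -/
def IsCDPair (P : Set (VSp X)) (η T : C(X, ℝ)) : Prop :=
  (∀ x, 0 < T x) ∧
    ∀ β : C(X, ℝ), (∀ x, β x = (T x)⁻¹) → ∀ p ∈ P, p.2 β ≤ p.1 η

/-- A Clausius–Duhem temperature scale. -/
def IsCDTemp (P : Set (VSp X)) (T : C(X, ℝ)) : Prop :=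
  ∃ η : C(X, ℝ), IsCDPair P η T

/-- Two states are of the same hotness: both `(0, δ_a − δ_b)` and `(0, δ_b − δ_a)`
belong to `\hat P`. -/
def SameHotness (P : Set (VSp X)) (a b : X) : Prop :=
  ((0 : Meas X), dirac a - dirac b) ∈ hatP P ∧
    ((0 : Meas X), dirac b - dirac a) ∈ hatP P

/-- The hotness level of a state. -/
def hotnessLevel (P : Set (VSp X)) (a : X) : Set X :=
  {b | SameHotness P a b}

/-- A subset of the state space that is a hotness level. -/
def IsHotnessLevel (P : Set (VSp X)) (h : Set X) : Prop :=
  ∃ a : X, h = hotnessLevel P a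

/-- The (signed) measure `μ` is supported in the set `A`: `μ` annihilates every
continuous function vanishing on `A`. -/
def SuppIn (μ : Meas X) (A : Set X) : Prop :=
  ∀ f : C(X, ℝ), (∀ x ∈ A, f x = 0) → μ f = 0

/-- `\hat Q` contains a passive heat transfer from hotness level `h` to `h'`:
an element `(0, μ − μ')` of `\hat Q` with `μ, μ'` nonnegative, `supp μ ⊆ h`,
`supp μ' ⊆ h'` and `μ(h) = μ'(h') > 0` (the common value being the total mass). -/
def IsPassiveHT (Q : Set (VSp X)) (h h' : Set X) : Prop :=
  ∃ μ μ' : Meas X, μ ∈ PosMeas X ∧ μ' ∈ PosMeas X ∧ SuppIn μ h ∧ SuppIn μ' h' ∧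
    μ (1 : C(X, ℝ)) = μ' (1 : C(X, ℝ)) ∧ 0 < μ (1 : C(X, ℝ)) ∧
    ((0 : Meas X), μ - μ') ∈ hatP Q

/-- Hotness level `h'` is hotter than `h`: the levels are distinct and every
thermodynamical theory whose closed process cone contains `P` together with a
passive heat transfer from `h` to `h'` fails to be a Kelvin–Planck theory. -/
def Hotter (P : Set (VSp X)) (h' h : Set X) : Prop :=
  h' ≠ h ∧ ∀ Pd : Set (VSp X), IsThermoTheory Pd → P ⊆ hatP Pd →
    IsPassiveHT Pd h h' → ¬ IsKelvinPlanck Pd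

/-- State `a` is hotter than state `b`. -/
def HotterState (P : Set (VSp X)) (a b : X) : Prop :=
  Hotter P (hotnessLevel P a) (hotnessLevel P b)

/-- A Carnot element of the theory `P` operating between hotness levels `h'` and
`h`: a reversible cyclic element `(0, μ' − μ)` with `μ', μ` nonzero nonnegative
measures supported in `h'`, `h` respectively. -/
def IsCarnotBetween (P : Set (VSp X)) (h' h : Set X) (p : VSp X) : Prop :=
  p ∈ hatP P ∧ -p ∈ hatP P ∧
    ∃ μ' μ : Meas X, μ' ∈ PosMeas X ∧ μ ∈ PosMeas X ∧ μ' ≠ 0 ∧ μ ≠ 0 ∧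
      SuppIn μ' h' ∧ SuppIn μ h ∧ p = ((0 : Meas X), μ' - μ)

end

noncomputable section

/-- The inclusion of the left summand as a continuous map. -/
def inlCM (X Y : Type*) [TopologicalSpace X] [TopologicalSpace Y] : C(X, X ⊕ Y) :=
  ⟨Sum.inl, continuous_inl⟩

/-- The inclusion of the right summand as a continuous map. -/
def inrCM (X Y : Type*) [TopologicalSpace X] [TopologicalSpace Y] : C(Y, X ⊕ Y) :=
  ⟨Sum.inr, continuous_inr⟩

/-- The continuous indicator function of the left summand of a disjoint union. -/
def charL (X Y : Type*) [TopologicalSpace X] [TopologicalSpace Y] : C(X ⊕ Y, ℝ) :=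
  ⟨Sum.elim (fun _ => (1 : ℝ)) (fun _ => (0 : ℝ)), by continuity⟩

/-- The continuous indicator function of the right summand of a disjoint union. -/
def charR (X Y : Type*) [TopologicalSpace X] [TopologicalSpace Y] : C(X ⊕ Y, ℝ) :=
  ⟨Sum.elim (fun _ => (0 : ℝ)) (fun _ => (1 : ℝ)), by continuity⟩

/-- `P` is essentially contained in `Q` along the embedding `ι`: every process of
`P`, extended by zero outside the range of `ι` (i.e. pushed forward along `ι`),
belongs to `Q`. -/
def EssCont {Z W : Type*} [TopologicalSpace Z] [TopologicalSpace W]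
    (ι : C(Z, W)) (P : Set (VSp Z)) (Q : Set (VSp W)) : Prop :=
  ∀ p ∈ P, ∃ q ∈ Q, ∀ f : C(W, ℝ),
    q.1 f = p.1 (f.comp ι) ∧ q.2 f = p.2 (f.comp ι)

/-- `P₃`, on the disjoint union `X ⊕ Y`, is a conjunction of the theories `P₁`
(on `X`) and `P₂` (on `Y`): it is a thermodynamical theory essentially containing
`P₁` and `P₂`, and every change of condition of `P₃` vanishes on each of `X`, `Y`. -/
def IsConjunction {X Y : Type*} [TopologicalSpace X] [TopologicalSpace Y]
    (P₁ : Set (VSp X)) (P₂ : Set (VSp Y)) (P₃ : Set (VSp (X ⊕ Y))) : Prop :=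
  IsThermoTheory P₃ ∧
    EssCont (inlCM X Y) P₁ P₃ ∧ EssCont (inrCM X Y) P₂ P₃ ∧
    ∀ p ∈ P₃, p.1 (charL X Y) = 0 ∧ p.1 (charR X Y) = 0

/-- State `a` is weakly hotter than state `b` in the theory `P`. -/
def WHotterState {X : Type*} [TopologicalSpace X] (P : Set (VSp X)) (a b : X) : Prop :=
  ¬ SameHotness P a b ∧
    ∃ ν ∈ PosMeas X, ((0 : Meas X), dirac a - dirac b + ν) ∈ hatP P

/-- The hotness levels of the theory `P` are totally ordered by the
hotter-than relation. -/
def TotallyOrderedHotness {X : Type*} [TopologicalSpace X] (P : Set (VSp X)) : Prop :=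
  ∀ a b : X, SameHotness P a b ∨ HotterState P a b ∨ HotterState P b a

/-- `PC`, on `Θ ⊕ X`, is a thermometric conjunction of the thermometer theory `PΘ`
(on `Θ`) and the theory `P` (on `X`): a Kelvin–Planck conjunction in which every
state of `X` is of the same hotness as some state of `Θ`. -/
def IsThermometricConjunction {Θ X : Type*} [TopologicalSpace Θ] [TopologicalSpace X]
    (PΘ : Set (VSp Θ)) (P : Set (VSp X)) (PC : Set (VSp (Θ ⊕ X))) : Prop :=
  IsKelvinPlanck PC ∧ IsConjunction PΘ P PC ∧
    ∀ σ : X, ∃ θ : Θ, SameHotness PC (Sum.inr σ) (Sum.inl θ)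

end


noncomputable section ThermoAux

open Set

instance (priority := 100) weakDualLCS {E : Type*} [NormedAddCommGroup E] [NormedSpace ℝ E] :
    LocallyConvexSpace ℝ (WeakDual ℝ E) := WeakBilin.locallyConvexSpace

variable {W : Type*} [TopologicalSpace W] [CompactSpace W] [T2Space W]

lemma hatP_smul_mem {Q : Set (VSp W)} {c : ℝ} (hc : 0 ≤ c) {x : VSp W} (hx : x ∈ hatP Q) :
    c • x ∈ hatP Q := by
  refine map_mem_closure (continuous_const_smul c) hx ?_
  rintro y ⟨c', hc', p, hp, rfl⟩
  exact ⟨c * c', mul_nonneg hc hc', p, hp, smul_smul c c' p⟩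

lemma hatP_zero_mem {Q : Set (VSp W)} (h : (hatP Q).Nonempty) : (0 : VSp W) ∈ hatP Q := by
  obtain ⟨x, hx⟩ := h
  simpa using hatP_smul_mem (le_refl (0 : ℝ)) hx

lemma posMeas_one_nonneg {μ : Meas W} (hμ : μ ∈ PosMeas W) : 0 ≤ μ (1 : C(W, ℝ)) :=
  hμ 1 fun _ => zero_le_one

lemma posMeas_abs_apply_le {μ : Meas W} (hμ : μ ∈ PosMeas W) (f : C(W, ℝ)) :
    |μ f| ≤ ‖f‖ * μ (1 : C(W, ℝ)) := by
  have hb : ∀ x : W, |f x| ≤ ‖f‖ := fun x => by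
    rw [← Real.norm_eq_abs]; exact f.norm_coe_le_norm x
  have h₁ : 0 ≤ μ (‖f‖ • (1 : C(W, ℝ)) - f) := by
    refine hμ _ fun x => ?_
    have := (abs_le.mp (hb x)).2
    simp only [ContinuousMap.sub_apply, ContinuousMap.smul_apply, ContinuousMap.one_apply,
      smul_eq_mul, mul_one, sub_nonneg]
    exact this
  have h₂ : 0 ≤ μ (‖f‖ • (1 : C(W, ℝ)) + f) := by
    refine hμ _ fun x => ?_
    have := (abs_le.mp (hb x)).1
    simp only [ContinuousMap.add_apply, ContinuousMap.smul_apply, ContinuousMap.one_apply,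
      smul_eq_mul, mul_one]
    linarith
  rw [map_sub, map_smul, smul_eq_mul] at h₁
  rw [map_add, map_smul, smul_eq_mul] at h₂
  rw [abs_le]
  constructor <;> linarith

lemma posMeas_eq_zero {μ : Meas W} (hμ : μ ∈ PosMeas W) (h : μ (1 : C(W, ℝ)) = 0) :
    μ = 0 := by
  apply ContinuousLinearMap.ext
  intro f
  have h1 := posMeas_abs_apply_le hμ f
  rw [h, mul_zero] at h1
  have : μ f = 0 := abs_eq_zero.mp (le_antisymm h1 (abs_nonneg _))
  exact this

/-- The set of "probability-like" positive functionals of total mass one. -/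
def posProb (W : Type*) [TopologicalSpace W] : Set (Meas W) :=
  {μ | μ ∈ PosMeas W ∧ μ (1 : C(W, ℝ)) = 1}

lemma isClosed_posMeas : IsClosed (PosMeas W) := by
  have h : PosMeas W = ⋂ (f : C(W, ℝ)) (_ : ∀ x, 0 ≤ f x), {μ : Meas W | 0 ≤ μ f} := by
    ext μ; simp [PosMeas]
  rw [h]
  exact isClosed_iInter fun f => isClosed_iInter fun _ =>
    isClosed_le continuous_const (WeakDual.eval_continuous f)

lemma isClosed_posProb : IsClosed (posProb W) := by
  have h : posProb W = PosMeas W ∩ {μ : Meas W | μ (1 : C(W, ℝ)) = 1} := rfl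
  rw [h]
  exact isClosed_posMeas.inter (isClosed_eq (WeakDual.eval_continuous _) continuous_const)

lemma isCompact_posProb : IsCompact (posProb W) := by
  apply WeakDual.isCompact_of_bounded_of_closed _ isClosed_posProb
  apply Bornology.IsBounded.subset
    (Metric.isBounded_closedBall (x := (0 : StrongDual ℝ C(W, ℝ))) (r := 1))
  intro μ hμ
  rw [Metric.mem_closedBall]; refine (dist_zero_right μ).le.trans ?_
  refine ContinuousLinearMap.opNorm_le_bound _ zero_le_one fun f => ?_
  have h := posMeas_abs_apply_le (hμ.1) f
  rw [hμ.2, mul_one] at h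
  rw [Real.norm_eq_abs, one_mul]
  exact h

lemma convex_posProb : Convex ℝ (posProb W) := by
  intro μ hμ ν hν a b ha hb hab
  constructor
  · intro f hf
    have h1 := hμ.1 f hf
    have h2 := hν.1 f hf
    have h3 : (a • μ + b • ν) f = a * μ f + b * ν f := rfl
    rw [h3]
    exact add_nonneg (mul_nonneg ha h1) (mul_nonneg hb h2)
  · have h3 : (a • μ + b • ν) (1 : C(W, ℝ)) = a * μ 1 + b * ν 1 := rfl
    rw [h3, hμ.2, hν.2, mul_one, mul_one, hab]

end ThermoAux

set_option maxHeartbeats 2000000 in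
/-- **Proposition.** Let `(XC, PC)` (with `XC = Θ ⊕ X`) be a Kelvin–Planck
conjunction of the Kelvin–Planck theories `(Θ, PΘ)` and `(X, P)`.  If (i) `Θ` is
connected, (ii) any two states, one in `X` and the other in `Θ`, not of the same
hotness in the conjunction are comparable under the weakly-hotter-than relation of
the conjunction, and (iii) for each `σ ∈ X` there are states of `Θ` weakly hotter
than, and weakly colder than, `σ`, then `(Θ, PΘ)` is a thermometer for `(X, P)`:
every `σ ∈ X` is of the same hotness in the conjunction as some state of `Θ`. -/
theorem thermometer_of_connected_and_comparable
    {Θ X : Type*} [TopologicalSpace Θ] [CompactSpace Θ] [T2Space Θ]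
    [TopologicalSpace X] [CompactSpace X] [T2Space X]
    (PΘ : Set (VSp Θ)) (hPΘ : IsKelvinPlanck PΘ)
    (P : Set (VSp X)) (hP : IsKelvinPlanck P)
    (PC : Set (VSp (Θ ⊕ X))) (hPC : IsKelvinPlanck PC)
    (hconj : IsConjunction PΘ P PC)
    (hconn : ConnectedSpace Θ)
    (hcomp : ∀ (σ : X) (θ : Θ), ¬ SameHotness PC (Sum.inr σ) (Sum.inl θ) →
      WHotterState PC (Sum.inr σ) (Sum.inl θ) ∨
        WHotterState PC (Sum.inl θ) (Sum.inr σ))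
    (hbound : ∀ σ : X,
      (∃ θ : Θ, WHotterState PC (Sum.inl θ) (Sum.inr σ)) ∧
      (∃ θ' : Θ, WHotterState PC (Sum.inr σ) (Sum.inl θ'))) :
    ∀ σ : X, ∃ θ : Θ, SameHotness PC (Sum.inr σ) (Sum.inl θ) := by
  classical
  intro σ
  by_contra hno
  push_neg at hno
  -- abbreviation for the closed process cone
  have hKconv : Convex ℝ (hatP PC) := hPC.1.2
  have hKcl : IsClosed (hatP PC) := isClosed_closure
  obtain ⟨⟨θH, hθH⟩, ⟨θC, hθC⟩⟩ := hbound σ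
  have hK0 : (0 : VSp (Θ ⊕ X)) ∈ hatP PC := by
    obtain ⟨-, ν, -, hmem⟩ := hθH
    exact hatP_zero_mem ⟨_, hmem⟩
  -- the dual cone predicate
  set D : ((VSp (Θ ⊕ X)) →L[ℝ] ℝ) → Prop := fun L =>
    (∀ p ∈ hatP PC, L p ≤ 0) ∧
      ∀ ν ∈ PosMeas (Θ ⊕ X), 0 ≤ L ((0 : Meas (Θ ⊕ X)), ν) with hD
  -- positivity on probability functionals extends to all positive functionals
  have hposext : ∀ L : (VSp (Θ ⊕ X)) →L[ℝ] ℝ,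
      (∀ μ ∈ posProb (Θ ⊕ X), 0 ≤ L ((0 : Meas (Θ ⊕ X)), μ)) →
      ∀ ν ∈ PosMeas (Θ ⊕ X), 0 ≤ L ((0 : Meas (Θ ⊕ X)), ν) := by
    intro L hL ν hν
    rcases (posMeas_one_nonneg hν).eq_or_lt with h0 | hpos
    · have hν0 : ν = 0 := posMeas_eq_zero hν h0.symm
      rw [hν0]
      have h1 : ((0 : Meas (Θ ⊕ X)), (0 : Meas (Θ ⊕ X))) = (0 : VSp (Θ ⊕ X)) := rfl
      rw [h1, map_zero]
    · have hmem : (ν 1)⁻¹ • ν ∈ posProb (Θ ⊕ X) := by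
        refine ⟨fun f hf => ?_, ?_⟩
        · have h1 : ((ν 1)⁻¹ • ν) f = (ν 1)⁻¹ * ν f := rfl
          rw [h1]
          exact mul_nonneg (inv_nonneg.mpr hpos.le) (hν f hf)
        · have h1 : ((ν 1)⁻¹ • ν) (1 : C(Θ ⊕ X, ℝ)) = (ν 1)⁻¹ * ν 1 := rfl
          rw [h1, inv_mul_cancel₀ hpos.ne']
      have heq : ((0 : Meas (Θ ⊕ X)), ν)
          = (ν 1) • ((0 : Meas (Θ ⊕ X)), (ν 1)⁻¹ • ν) := by
        rw [Prod.smul_mk, smul_smul, mul_inv_cancel₀ hpos.ne', one_smul, smul_zero]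
      rw [heq, map_smul, smul_eq_mul]
      exact mul_nonneg hpos.le (hL _ hmem)
  -- monotonicity of dual functionals along the weakly-hotter relation
  have hmono : ∀ L, D L → ∀ a b : Θ ⊕ X, WHotterState PC a b →
      L ((0 : Meas (Θ ⊕ X)), dirac a) ≤ L ((0 : Meas (Θ ⊕ X)), dirac b) := by
    intro L hL a b hw
    obtain ⟨-, ν, hν, hmem⟩ := hw
    have h1 := hL.1 _ hmem
    have heq : ((0 : Meas (Θ ⊕ X)), dirac a - dirac b + ν)
        = ((0 : Meas (Θ ⊕ X)), dirac a) - ((0 : Meas (Θ ⊕ X)), dirac b)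
          + ((0 : Meas (Θ ⊕ X)), ν) := by
      rw [Prod.mk_sub_mk, Prod.mk_add_mk]; norm_num
    rw [heq, map_add, map_sub] at h1
    have h2 := hL.2 ν hν
    linarith
  -- separation of the compact convex base of {0} × M₊ from the process cone
  have hdisj : Disjoint ((({0} : Set (Meas (Θ ⊕ X)))) ×ˢ posProb (Θ ⊕ X)) (hatP PC) := by
    rw [Set.disjoint_left]
    rintro ⟨m, μ⟩ ⟨hm, hμ⟩ hK
    have hmem : ((m, μ) : VSp (Θ ⊕ X)) ∈ hatP PC
        ∩ (({0} : Set (Meas (Θ ⊕ X))) ×ˢ PosMeas (Θ ⊕ X)) := ⟨hK, hm, hμ.1⟩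
    rw [hPC.2] at hmem
    have h2 : μ = 0 := congrArg Prod.snd (Set.mem_singleton_iff.mp hmem)
    rw [h2] at hμ
    exact zero_ne_one hμ.2
  obtain ⟨L, u, v, hLS, huv, hLK⟩ :=
    geometric_hahn_banach_compact_closed
      ((convex_singleton _).prod convex_posProb)
      (isCompact_singleton.prod isCompact_posProb) hKconv hKcl hdisj
  have hv0 : v < 0 := by have h := hLK 0 hK0; rwa [map_zero] at h
  have hKnonneg : ∀ p ∈ hatP PC, 0 ≤ L p := by
    intro p hp
    by_contra hneg
    push_neg at hneg
    have hne : L p ≠ 0 := ne_of_lt hneg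
    set c : ℝ := -((|v| + 1) / L p) with hc
    have hc0 : 0 ≤ c := by
      have hd : (|v| + 1) / L p < 0 := div_neg_of_pos_of_neg (by positivity) hneg
      rw [hc]
      linarith
    have h2 := hLK _ (hatP_smul_mem hc0 hp)
    rw [map_smul, smul_eq_mul] at h2
    have h3 : c * L p = -(|v| + 1) := by
      rw [hc, neg_mul, div_mul_cancel₀ _ hne]
    rw [h3] at h2
    have h4 := neg_abs_le v
    linarith
  set L₁ : (VSp (Θ ⊕ X)) →L[ℝ] ℝ := -L with hL₁
  have hL₁K : ∀ p ∈ hatP PC, L₁ p ≤ 0 := by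
    intro p hp
    simp only [hL₁, ContinuousLinearMap.neg_apply, neg_nonpos]
    exact hKnonneg p hp
  have hu0 : u < 0 := huv.trans hv0
  have hL₁S : ∀ μ ∈ posProb (Θ ⊕ X), -u ≤ L₁ ((0 : Meas (Θ ⊕ X)), μ) := by
    intro μ hμ
    have h := hLS ((0 : Meas (Θ ⊕ X)), μ) ⟨rfl, hμ⟩
    simp only [hL₁, ContinuousLinearMap.neg_apply]
    linarith
  have hDL₁ : D L₁ :=
    ⟨hL₁K, hposext L₁ fun μ hμ => le_trans (by linarith) (hL₁S μ hμ)⟩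
  -- the two closed comparison sets in Θ
  set A : Set Θ := {θ | ∀ L', D L' →
      L' ((0 : Meas (Θ ⊕ X)), dirac (Sum.inl θ : Θ ⊕ X))
        ≤ L' ((0 : Meas (Θ ⊕ X)), dirac (Sum.inr σ : Θ ⊕ X))} with hA
  set B : Set Θ := {θ | ∀ L', D L' →
      L' ((0 : Meas (Θ ⊕ X)), dirac (Sum.inr σ : Θ ⊕ X))
        ≤ L' ((0 : Meas (Θ ⊕ X)), dirac (Sum.inl θ : Θ ⊕ X))} with hB
  have hdiraccont :
      Continuous fun θ : Θ => ((0 : Meas (Θ ⊕ X)), dirac (Sum.inl θ : Θ ⊕ X)) := by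
    refine continuous_const.prodMk ?_
    exact WeakDual.continuous_of_continuous_eval fun f => (map_continuous f).comp continuous_inl
  have hAcl : IsClosed A := by
    have h : A = ⋂ (L' : (VSp (Θ ⊕ X)) →L[ℝ] ℝ) (_ : D L'),
        {θ : Θ | L' ((0 : Meas (Θ ⊕ X)), dirac (Sum.inl θ : Θ ⊕ X))
          ≤ L' ((0 : Meas (Θ ⊕ X)), dirac (Sum.inr σ : Θ ⊕ X))} := by
      ext θ; simp [hA]
    rw [h]
    exact isClosed_iInter fun L' => isClosed_iInter fun _ =>
      isClosed_le (L'.continuous.comp hdiraccont) continuous_const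
  have hBcl : IsClosed B := by
    have h : B = ⋂ (L' : (VSp (Θ ⊕ X)) →L[ℝ] ℝ) (_ : D L'),
        {θ : Θ | L' ((0 : Meas (Θ ⊕ X)), dirac (Sum.inr σ : Θ ⊕ X))
          ≤ L' ((0 : Meas (Θ ⊕ X)), dirac (Sum.inl θ : Θ ⊕ X))} := by
      ext θ; simp [hB]
    rw [h]
    exact isClosed_iInter fun L' => isClosed_iInter fun _ =>
      isClosed_le continuous_const (L'.continuous.comp hdiraccont)
  have hAmem : θH ∈ A := fun L' hL' => hmono L' hL' _ _ hθH
  have hBmem : θC ∈ B := fun L' hL' => hmono L' hL' _ _ hθC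
  have hcover : ∀ θ, θ ∈ A ∪ B := by
    intro θ
    rcases hcomp σ θ (hno θ) with h | h
    · exact Or.inr fun L' hL' => hmono L' hL' _ _ h
    · exact Or.inl fun L' hL' => hmono L' hL' _ _ h
  -- connectedness gives a state of Θ in both sets
  have hAB : (A ∩ B).Nonempty := by
    by_contra hempty
    rw [Set.not_nonempty_iff_eq_empty] at hempty
    haveI := hconn
    have hcov : (Set.univ : Set Θ) ⊆ Aᶜ ∪ Bᶜ := by
      rw [← Set.compl_inter, hempty, Set.compl_empty]
    have h1 : ((Set.univ : Set Θ) ∩ Aᶜ).Nonempty :=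
      ⟨θC, trivial, fun hA' => Set.eq_empty_iff_forall_notMem.mp hempty θC ⟨hA', hBmem⟩⟩
    have h2 : ((Set.univ : Set Θ) ∩ Bᶜ).Nonempty :=
      ⟨θH, trivial, fun hB' => Set.eq_empty_iff_forall_notMem.mp hempty θH ⟨hAmem, hB'⟩⟩
    obtain ⟨θ0, -, h0⟩ := PreconnectedSpace.isPreconnected_univ (α := Θ)
      Aᶜ Bᶜ hAcl.isOpen_compl hBcl.isOpen_compl hcov h1 h2
    rcases hcover θ0 with h | h
    · exact h0.1 h
    · exact h0.2 h
  obtain ⟨θs, hθsA, hθsB⟩ := hAB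
  have heqL : ∀ L', D L' →
      L' ((0 : Meas (Θ ⊕ X)), dirac (Sum.inl θs : Θ ⊕ X))
        = L' ((0 : Meas (Θ ⊕ X)), dirac (Sum.inr σ : Θ ⊕ X)) :=
    fun L' hL' => le_antisymm (hθsA L' hL') (hθsB L' hL')
  -- key separation contradiction
  have key : ∀ c d : Θ ⊕ X, ((0 : Meas (Θ ⊕ X)), dirac c - dirac d) ∉ hatP PC →
      (∀ L', D L' → L' ((0 : Meas (Θ ⊕ X)), dirac c)
        = L' ((0 : Meas (Θ ⊕ X)), dirac d)) → False := by
    intro c d hnotin hEq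
    obtain ⟨L₀, u₀, hL₀K, hu₀⟩ := geometric_hahn_banach_closed_point hKconv hKcl hnotin
    have hu₀0 : 0 < u₀ := by have h := hL₀K 0 hK0; rwa [map_zero] at h
    have hL₀np : ∀ p ∈ hatP PC, L₀ p ≤ 0 := by
      intro p hp
      by_contra hpos
      push_neg at hpos
      set c' : ℝ := (u₀ + 1) / (L₀ p) with hc'
      have hc0 : 0 ≤ c' := div_nonneg (by linarith) hpos.le
      have h2 := hL₀K _ (hatP_smul_mem hc0 hp)
      rw [map_smul, smul_eq_mul] at h2
      have h3 : c' * L₀ p = u₀ + 1 := div_mul_cancel₀ _ (ne_of_gt hpos)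
      rw [h3] at h2
      linarith
    obtain ⟨M, hM0, hM⟩ : ∃ M : ℝ, 0 ≤ M ∧
        ∀ μ ∈ posProb (Θ ⊕ X), |L₀ ((0 : Meas (Θ ⊕ X)), μ)| ≤ M := by
      obtain ⟨C, hC⟩ := (isCompact_posProb (W := Θ ⊕ X)).exists_bound_of_continuousOn
        (f := fun μ : Meas (Θ ⊕ X) => L₀ ((0 : Meas (Θ ⊕ X)), μ))
        ((L₀.continuous.comp (continuous_const.prodMk continuous_id)).continuousOn)
      refine ⟨max C 0, le_max_right _ _, fun μ hμ => ?_⟩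
      have h := hC μ hμ
      rw [Real.norm_eq_abs] at h
      exact h.trans (le_max_left _ _)
    set ε : ℝ := (-u) / (M + 1) with hε
    have hε0 : 0 < ε := div_pos (by linarith) (by linarith)
    have hεkey : ε * (M + 1) = -u := div_mul_cancel₀ _ (by linarith)
    set L₂ : (VSp (Θ ⊕ X)) →L[ℝ] ℝ := L₁ + ε • L₀ with hL₂
    have hL₂apply : ∀ x, L₂ x = L₁ x + ε * L₀ x := fun x => rfl
    have hDL₂ : D L₂ := by
      constructor
      · intro p hp
        rw [hL₂apply]
        have h1 := hL₁K p hp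
        have h2 := hL₀np p hp
        nlinarith
      · apply hposext
        intro μ hμ
        rw [hL₂apply]
        have h1 := hL₁S μ hμ
        have h2 := abs_le.mp (hM μ hμ)
        nlinarith [mul_le_mul_of_nonneg_left h2.1 hε0.le]
    have e1 := hEq L₁ hDL₁
    have e2 := hEq L₂ hDL₂
    rw [hL₂apply, hL₂apply] at e2
    have e0 : L₀ ((0 : Meas (Θ ⊕ X)), dirac c)
        = L₀ ((0 : Meas (Θ ⊕ X)), dirac d) := by
      have h : ε * L₀ ((0 : Meas (Θ ⊕ X)), dirac c)
          = ε * L₀ ((0 : Meas (Θ ⊕ X)), dirac d) := by linarith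
      exact mul_left_cancel₀ hε0.ne' h
    have hsplit : ((0 : Meas (Θ ⊕ X)), dirac c - dirac d)
        = ((0 : Meas (Θ ⊕ X)), dirac c) - ((0 : Meas (Θ ⊕ X)), dirac d) := by
      rw [Prod.mk_sub_mk]; norm_num
    rw [hsplit, map_sub, e0, sub_self] at hu₀
    linarith
  rcases not_and_or.mp (hno θs) with h | h
  · exact key _ _ h fun L' hL' => (heqL L' hL').symm
  · exact key _ _ h fun L' hL' => heqL L' hL'
end

section
/- Let (Σ,P) be a Kelvin–Planck theory, let (Σ_Θ,P_Θ) be a thermometer for (Σ,P) (a Kelvin–Planck theory with state space disjoint from Σ whose hotness levels are totally ordered by its hotter-than relation), and let (Σ_C,P_C) be a thermometric conjunction of (Σ,P) and (Σ_Θ,P_Θ). Then: (i) the hotness levels of (Σ_C,P_C) are totally ordered by the hotter-than relation ≻_C of (Σ_C,P_C); in particular, any two states of Σ not of the same hotness in (Σ_C,P_C) are ≻_C-comparable; (ii) if the thermometer is ideal (all of its Clausius–Duhem temperature scales are positive multiples of some fixed one), then all Clausius–Duhem temperature scales for (Σ_C,P_C) are positive multiples of some fixed one, and in particular the restrictions to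 Σ of all Clausius–Duhem temperature scales for (Σ_C,P_C) differ by at most a positive multiple. -/
open Set

/- ## Auxiliary infrastructure -/

noncomputable section AuxBasic

open Filter Topology

variable {Z W : Type*} [TopologicalSpace Z] [TopologicalSpace W]

lemma dirac_apply (z : Z) (f : C(Z, ℝ)) : dirac z f = f z := rfl

lemma dirac_posMeas (z : Z) : dirac z ∈ PosMeas Z := fun f hf => hf z

lemma dirac_suppIn {z : Z} {A : Set Z} (hz : z ∈ A) : SuppIn (dirac z) A :=
  fun f hf => hf z hz

lemma meas_sub_apply (μ ν : Meas Z) (f : C(Z, ℝ)) : (μ - ν) f = μ f - ν f := rfl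

lemma meas_zero_apply (f : C(Z, ℝ)) : (0 : Meas Z) f = 0 := rfl

lemma subset_hatP (P : Set (VSp Z)) : P ⊆ hatP P := fun p hp =>
  subset_closure ⟨1, zero_le_one, p, hp, (one_smul ℝ p).symm⟩

lemma nonempty_of_hatP {P : Set (VSp Z)} (h : (hatP P).Nonempty) : P.Nonempty := by
  rcases closure_nonempty_iff.1 h with ⟨x, c, hc, p, hp, rfl⟩
  exact ⟨p, hp⟩

lemma zero_mem_hatP {P : Set (VSp Z)} (h : P.Nonempty) : (0 : VSp Z) ∈ hatP P := by
  rcases h with ⟨p, hp⟩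
  exact subset_closure ⟨0, le_rfl, p, hp, (zero_smul ℝ p).symm⟩

lemma smul_mem_hatP {P : Set (VSp Z)} {c : ℝ} (hc : 0 ≤ c) {p : VSp Z} (hp : p ∈ hatP P) :
    c • p ∈ hatP P := by
  rcases eq_or_lt_of_le hc with rfl | hc'
  · rw [zero_smul]; exact zero_mem_hatP (nonempty_of_hatP ⟨p, hp⟩)
  · refine map_mem_closure (continuous_const_smul c) hp ?_
    rintro x ⟨d, hd, q, hq, rfl⟩
    exact ⟨c * d, by positivity, q, hq, smul_smul c d q⟩

lemma add_mem_hatP {P : Set (VSp Z)} (hconv : Convex ℝ (hatP P)) {p q : VSp Z}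
    (hp : p ∈ hatP P) (hq : q ∈ hatP P) : p + q ∈ hatP P := by
  have hmid : (1 / 2 : ℝ) • p + (1 / 2 : ℝ) • q ∈ hatP P :=
    hconv hp hq (by norm_num) (by norm_num) (by norm_num)
  have h2 := smul_mem_hatP (c := 2) (by norm_num) hmid
  rwa [smul_add, smul_smul, smul_smul, show (2 : ℝ) * (1 / 2) = 1 by norm_num, one_smul,
    one_smul] at h2

lemma hatP_subset {P Q : Set (VSp Z)} (h : P ⊆ hatP Q) : hatP P ⊆ hatP Q :=
  closure_minimal (by rintro x ⟨c, hc, p, hp, rfl⟩; exact smul_mem_hatP hc (h hp))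
    isClosed_closure

lemma eval1_continuous (f : C(Z, ℝ)) : Continuous fun p : VSp Z => p.1 f :=
  (WeakDual.eval_continuous f).comp continuous_fst

lemma eval2_continuous (f : C(Z, ℝ)) : Continuous fun p : VSp Z => p.2 f :=
  (WeakDual.eval_continuous f).comp continuous_snd

lemma hatP_le {P : Set (VSp Z)} {η β : C(Z, ℝ)} (h : ∀ p ∈ P, p.2 β ≤ p.1 η) :
    ∀ p ∈ hatP P, p.2 β ≤ p.1 η := by
  intro p hp
  refine closure_minimal ?_ (isClosed_le (eval2_continuous β) (eval1_continuous η)) hp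
  rintro x ⟨c, hc, q, hq, rfl⟩
  show (c • q).2 β ≤ (c • q).1 η
  have h1 : (c • q).2 β = c * q.2 β := rfl
  have h2 : (c • q).1 η = c * q.1 η := rfl
  rw [h1, h2]
  exact mul_le_mul_of_nonneg_left (h q hq) hc

lemma hatP_mass {P : Set (VSp Z)} (h : ∀ p ∈ P, p.1 (1 : C(Z, ℝ)) = 0) :
    ∀ p ∈ hatP P, p.1 (1 : C(Z, ℝ)) = 0 := by
  intro p hp
  refine closure_minimal ?_ (isClosed_eq (eval1_continuous 1) continuous_const) hp
  rintro x ⟨c, hc, q, hq, rfl⟩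
  show (c • q).1 (1 : C(Z, ℝ)) = 0
  have h1 : (c • q).1 (1 : C(Z, ℝ)) = c * q.1 1 := rfl
  rw [h1, h q hq, mul_zero]

lemma posMeas_mono {ν : Meas Z} (hν : ν ∈ PosMeas Z) {f g : C(Z, ℝ)} (h : ∀ x, f x ≤ g x) :
    ν f ≤ ν g := by
  have h0 := hν (g - f) fun x => by simpa using sub_nonneg.2 (h x)
  have h1 : ν (g - f) = ν g - ν f := map_sub ν g f
  linarith

lemma posMeas_smul_one (ν : Meas Z) (c : ℝ) : ν (c • (1 : C(Z, ℝ))) = c * ν 1 := by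
  rw [map_smul]; rfl

lemma posMeas_eq_zero_s17 [CompactSpace Z] {ν : Meas Z} (hν : ν ∈ PosMeas Z)
    (h1 : ν (1 : C(Z, ℝ)) = 0) : ν = 0 := by
  refine DFunLike.ext _ _ fun f => ?_
  have hb : ∀ x, |f x| ≤ ‖f‖ := fun x => by
    rw [← Real.norm_eq_abs]; exact f.norm_coe_le_norm x
  have hub : ν f ≤ ν (‖f‖ • (1 : C(Z, ℝ))) :=
    posMeas_mono hν fun x => by simpa using le_trans (le_abs_self _) (hb x)
  have hlb : ν ((-‖f‖) • (1 : C(Z, ℝ))) ≤ ν f :=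
    posMeas_mono hν fun x => by simpa using (abs_le.1 (hb x)).1
  rw [posMeas_smul_one, h1, mul_zero] at hub
  rw [posMeas_smul_one, h1, mul_zero] at hlb
  rw [meas_zero_apply]
  linarith

lemma posMeas_zero_of_eval_nonpos [CompactSpace Z] {ν : Meas Z} (hν : ν ∈ PosMeas Z)
    {β : C(Z, ℝ)} (hβ : ∀ x, 0 < β x) (hle : ν β ≤ 0) : ν = 0 := by
  rcases isEmpty_or_nonempty Z with hZ | hZ
  · refine posMeas_eq_zero_s17 hν ?_
    have h0 : (1 : C(Z, ℝ)) = 0 := ContinuousMap.ext fun x => isEmptyElim x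
    rw [h0, map_zero]
  · obtain ⟨x₀, -, hx₀⟩ :=
      isCompact_univ.exists_isMinOn univ_nonempty β.continuous.continuousOn
    have hε : 0 < β x₀ := hβ x₀
    have h2 : ν (β x₀ • (1 : C(Z, ℝ))) ≤ ν β :=
      posMeas_mono hν fun x => by simpa using hx₀ (mem_univ x)
    rw [posMeas_smul_one] at h2
    have h3 : 0 ≤ ν 1 := hν 1 fun x => by norm_num
    have h4 : ν 1 = 0 := by nlinarith
    exact posMeas_eq_zero_s17 hν h4

lemma sameHotness_refl {P : Set (VSp Z)} (h0 : (0 : VSp Z) ∈ hatP P) (a : Z) :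
    SameHotness P a a := by
  have h : ((0 : Meas Z), dirac a - dirac a) = (0 : VSp Z) := by rw [sub_self]; rfl
  exact ⟨by rw [h]; exact h0, by rw [h]; exact h0⟩

lemma SameHotness.symm' {P : Set (VSp Z)} {a b : Z} (h : SameHotness P a b) :
    SameHotness P b a := ⟨h.2, h.1⟩

lemma sameHotness_trans {P : Set (VSp Z)} (hconv : Convex ℝ (hatP P)) {a b c : Z}
    (h1 : SameHotness P a b) (h2 : SameHotness P b c) : SameHotness P a c := by
  constructor
  · have hadd := add_mem_hatP hconv h1.1 h2.1
    rwa [Prod.mk_add_mk, add_zero, sub_add_sub_cancel] at hadd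
  · have hadd := add_mem_hatP hconv h2.2 h1.2
    rwa [Prod.mk_add_mk, add_zero, sub_add_sub_cancel] at hadd

lemma hotnessLevel_eq {P : Set (VSp Z)} (hconv : Convex ℝ (hatP P)) {a b : Z}
    (h : SameHotness P a b) : hotnessLevel P a = hotnessLevel P b := by
  ext x
  exact ⟨fun hx => sameHotness_trans hconv h.symm' hx, fun hx => sameHotness_trans hconv h hx⟩

lemma sameHotness_of_level_eq {P : Set (VSp Z)} (h0 : (0 : VSp Z) ∈ hatP P) {a b : Z}
    (h : hotnessLevel P a = hotnessLevel P b) : SameHotness P a b := by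
  have hb : b ∈ hotnessLevel P b := sameHotness_refl h0 b
  rw [← h] at hb; exact hb

end AuxBasic
noncomputable section AuxPush

open Filter Topology

variable {Z W : Type*} [TopologicalSpace Z] [TopologicalSpace W]

/-- Pushforward of a measure along a continuous map. -/
def pushM (ι : C(Z, W)) (φ : Meas Z) : Meas W :=
  { toFun := fun f => φ (f.comp ι)
    map_add' := fun f g => by
      show φ ((f + g).comp ι) = φ (f.comp ι) + φ (g.comp ι)
      rw [show (f + g).comp ι = f.comp ι + g.comp ι from rfl, map_add]
    map_smul' := fun c f => by
      show φ ((c • f).comp ι) = (RingHom.id ℝ) c • φ (f.comp ι)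
      rw [show (c • f).comp ι = c • (f.comp ι) from rfl, map_smul]; rfl
    cont := (ContinuousLinearMap.continuous (φ : C(Z, ℝ) →L[ℝ] ℝ)).comp
      (ContinuousMap.continuous_precomp ι) }

lemma pushM_apply (ι : C(Z, W)) (φ : Meas Z) (f : C(W, ℝ)) :
    pushM ι φ f = φ (f.comp ι) := rfl

lemma pushM_continuous (ι : C(Z, W)) : Continuous (pushM ι) :=
  WeakDual.continuous_of_continuous_eval fun f => WeakDual.eval_continuous (f.comp ι)

lemma pushM_smul (ι : C(Z, W)) (c : ℝ) (φ : Meas Z) :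
    pushM ι (c • φ) = c • pushM ι φ := DFunLike.ext _ _ fun f => rfl

lemma pushM_sub (ι : C(Z, W)) (φ ψ : Meas Z) :
    pushM ι (φ - ψ) = pushM ι φ - pushM ι ψ := DFunLike.ext _ _ fun f => rfl

lemma pushM_zero (ι : C(Z, W)) : pushM ι (0 : Meas Z) = 0 := DFunLike.ext _ _ fun f => rfl

lemma pushM_dirac (ι : C(Z, W)) (z : Z) : pushM ι (dirac z) = dirac (ι z) :=
  DFunLike.ext _ _ fun f => rfl

/-- Pushforward on the process space. -/
def pushV (ι : C(Z, W)) (p : VSp Z) : VSp W := (pushM ι p.1, pushM ι p.2)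

lemma pushV_continuous (ι : C(Z, W)) : Continuous (pushV ι) :=
  ((pushM_continuous ι).comp continuous_fst).prodMk ((pushM_continuous ι).comp continuous_snd)

lemma pushV_smul (ι : C(Z, W)) (c : ℝ) (p : VSp Z) :
    pushV ι (c • p) = c • pushV ι p := by
  unfold pushV
  rw [Prod.smul_fst, Prod.smul_snd, pushM_smul, pushM_smul]
  rfl

lemma push_hatP (ι : C(Z, W)) {P : Set (VSp Z)} {Q : Set (VSp W)}
    (h : ∀ p ∈ P, pushV ι p ∈ Q) : ∀ p ∈ hatP P, pushV ι p ∈ hatP Q := by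
  intro p hp
  refine map_mem_closure (pushV_continuous ι) hp ?_
  rintro x ⟨c, hc, q, hq, rfl⟩
  exact ⟨c, hc, pushV ι q, h q hq, pushV_smul ι c q⟩

lemma essCont_mem {PZ : Set (VSp Z)} {PW : Set (VSp W)} {ι : C(Z, W)}
    (hess : EssCont ι PZ PW) : ∀ p ∈ PZ, pushV ι p ∈ PW := by
  intro p hp
  obtain ⟨q, hqW, hq⟩ := hess p hp
  have : pushV ι p = q :=
    Prod.ext (DFunLike.ext _ _ fun f => ((hq f).1).symm)
      (DFunLike.ext _ _ fun f => ((hq f).2).symm)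
  rw [this]; exact hqW

end AuxPush

noncomputable section AuxCD

open Filter Topology

variable {Z W : Type*} [TopologicalSpace Z] [TopologicalSpace W]

/-- The continuous function `1/T` associated to a strictly positive `T`. -/
def invC (T : C(Z, ℝ)) (hT : ∀ x, 0 < T x) : C(Z, ℝ) :=
  ⟨fun z => (T z)⁻¹, T.continuous.inv₀ fun z => (hT z).ne'⟩

lemma invC_apply (T : C(Z, ℝ)) (hT : ∀ x, 0 < T x) (z : Z) : invC T hT z = (T z)⁻¹ := rfl

lemma invC_pos (T : C(Z, ℝ)) (hT : ∀ x, 0 < T x) (z : Z) : 0 < invC T hT z :=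
  inv_pos.2 (hT z)

lemma IsCDPair.hat_le {P : Set (VSp Z)} {η T : C(Z, ℝ)} (h : IsCDPair P η T) :
    ∀ p ∈ hatP P, p.2 (invC T h.1) ≤ p.1 η :=
  hatP_le (h.2 _ fun _ => rfl)

lemma IsCDPair.invC_eq_of_same {P : Set (VSp Z)} {η T : C(Z, ℝ)} (h : IsCDPair P η T)
    {a b : Z} (hs : SameHotness P a b) : T a = T b := by
  have h1 := h.hat_le _ hs.1
  have h2 := h.hat_le _ hs.2
  have e1 : ((0 : Meas Z), dirac a - dirac b).2 (invC T h.1) = (T a)⁻¹ - (T b)⁻¹ := rfl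
  have e2 : ((0 : Meas Z), dirac a - dirac b).1 η = 0 := rfl
  have e3 : ((0 : Meas Z), dirac b - dirac a).2 (invC T h.1) = (T b)⁻¹ - (T a)⁻¹ := rfl
  have e4 : ((0 : Meas Z), dirac b - dirac a).1 η = 0 := rfl
  rw [e1, e2] at h1
  rw [e3, e4] at h2
  have : (T a)⁻¹ = (T b)⁻¹ := by linarith
  exact inv_injective this

lemma suppIn_eval {μ : Meas Z} {A : Set Z} (hsupp : SuppIn μ A) {β : C(Z, ℝ)} {c : ℝ}
    (hc : ∀ x ∈ A, β x = c) : μ β = c * μ 1 := by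
  have h0 : μ (β - c • 1) = 0 := hsupp _ fun x hx => by simp [hc x hx]
  have h1 : μ (β - c • 1) = μ β - c * μ 1 := by
    rw [map_sub, posMeas_smul_one]
  linarith

end AuxCD
noncomputable section AuxDual

open Filter Topology

instance weakDualLocallyConvex {E : Type*} [AddCommGroup E] [Module ℝ E] [TopologicalSpace E] :
    LocallyConvexSpace ℝ (WeakDual ℝ E) :=
  inferInstanceAs (LocallyConvexSpace ℝ (WeakBilin (topDualPairing ℝ E)))

/-- Every continuous linear functional on a weak-star dual is evaluation at a point
of the predual. -/
lemma weakDual_dual_eval {E : Type*} [NormedAddCommGroup E] [NormedSpace ℝ E]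
    (g : WeakDual ℝ E →L[ℝ] ℝ) : ∃ e : E, ∀ φ : WeakDual ℝ E, g φ = φ e := by
  classical
  set B := topDualPairing ℝ E with hB
  have hws : WithSeminorms (LinearMap.toSeminormFamily B : E → Seminorm ℝ (WeakBilin B)) :=
    B.weakBilin_withSeminorms
  set q : Seminorm ℝ (WeakDual ℝ E) := (normSeminorm ℝ ℝ).comp g.toLinearMap with hq
  have hqc : Continuous q := by
    have hc : Continuous fun φ : WeakDual ℝ E => ‖g φ‖ := g.continuous.norm
    exact hc
  obtain ⟨s, C, hC, hle⟩ := Seminorm.bound_of_continuous hws q hqc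
  let L : s → WeakDual ℝ E →ₗ[ℝ] ℝ := fun e =>
    { toFun := fun φ => φ (e : E)
      map_add' := fun φ ψ => rfl
      map_smul' := fun c φ => rfl }
  have hker : ⨅ i : s, LinearMap.ker (L i) ≤ LinearMap.ker (g.toLinearMap) := by
    intro φ hφ
    simp only [Submodule.mem_iInf, LinearMap.mem_ker] at hφ ⊢
    have hsup : (s.sup (LinearMap.toSeminormFamily B)) φ ≤ 0 := by
      refine Seminorm.finset_sup_apply_le le_rfl fun e he => ?_
      have hz : φ e = 0 := hφ ⟨e, he⟩
      have : (LinearMap.toSeminormFamily B e) φ = ‖φ e‖ := rfl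
      rw [this, hz, norm_zero]
    have h2 : q φ ≤ (C • s.sup (LinearMap.toSeminormFamily B)) φ := hle φ
    have h3 : q φ = ‖g φ‖ := rfl
    have h4 : (C • s.sup (LinearMap.toSeminormFamily B)) φ
        = (C : ℝ) * (s.sup (LinearMap.toSeminormFamily B)) φ := rfl
    have h5 : 0 ≤ (s.sup (LinearMap.toSeminormFamily B)) φ := apply_nonneg _ _
    have h6 : (s.sup (LinearMap.toSeminormFamily B)) φ = 0 := le_antisymm hsup h5
    rw [h3, h4, h6, mul_zero] at h2
    exact norm_le_zero_iff.1 h2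
  have hmem := mem_span_of_iInf_ker_le_ker (L := L) (K := g.toLinearMap) hker
  obtain ⟨c, hc⟩ := (Submodule.mem_span_range_iff_exists_fun ℝ).1 hmem
  refine ⟨∑ i : s, c i • (i : E), fun φ => ?_⟩
  have h7 := congrArg (fun K : WeakDual ℝ E →ₗ[ℝ] ℝ => K φ) hc
  simp only [LinearMap.coe_sum, Finset.sum_apply, LinearMap.smul_apply] at h7
  have h8 : φ (∑ i : s, c i • (i : E)) = ∑ i : s, c i • (φ (i : E)) := by
    rw [map_sum]
    exact Finset.sum_congr rfl fun i _ => map_smul φ (c i) (i : E)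
  rw [h8]
  exact h7.symm

end AuxDual
noncomputable section AuxExists

open Filter Topology

variable {Z : Type*} [TopologicalSpace Z]

lemma kp_zero_mem {P : Set (VSp Z)} (h : IsKelvinPlanck P) : (0 : VSp Z) ∈ hatP P := by
  have h0 : ((0 : Meas Z), (0 : Meas Z)) ∈ hatP P ∩ (({0} : Set (Meas Z)) ×ˢ PosMeas Z) := by
    rw [h.2]; rfl
  exact h0.1

/-- **Existence of Clausius–Duhem pairs** for Kelvin–Planck theories, via the
Hahn–Banach separation theorem and Banach–Alaoglu. -/
theorem exists_cd_of_kp [CompactSpace Z] [T2Space Z] {P : Set (VSp Z)}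
    (h : IsKelvinPlanck P) : ∃ η T : C(Z, ℝ), IsCDPair P η T := by
  obtain ⟨⟨hmass, hconv⟩, hKP⟩ := h
  have h00 : (0 : VSp Z) ∈ hatP P := kp_zero_mem ⟨⟨hmass, hconv⟩, hKP⟩
  set S : Set (Meas Z) := {ν | ν ∈ PosMeas Z ∧ ν (1 : C(Z, ℝ)) = 1} with hS
  have hSclosed : IsClosed S := by
    have h1 : IsClosed {ν : Meas Z | ν ∈ PosMeas Z} := by
      have he : {ν : Meas Z | ν ∈ PosMeas Z}
          = ⋂ (f : C(Z, ℝ)) (_ : ∀ x, 0 ≤ f x), {ν : Meas Z | 0 ≤ ν f} := by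
        ext ν; simp [PosMeas, Set.mem_iInter]
      rw [he]
      exact isClosed_iInter fun f => isClosed_iInter fun hf =>
        isClosed_le continuous_const (WeakDual.eval_continuous f)
    exact h1.inter (isClosed_eq (WeakDual.eval_continuous 1) continuous_const)
  have hSnorm : ∀ ν ∈ S, ‖WeakDual.toStrongDual ν‖ ≤ 1 := by
    rintro ν ⟨hpos, hone⟩
    refine ContinuousLinearMap.opNorm_le_bound _ zero_le_one fun f => ?_
    rw [one_mul]
    have hb : ∀ x, |f x| ≤ ‖f‖ := fun x => by
      rw [← Real.norm_eq_abs]; exact f.norm_coe_le_norm x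
    have hub : ν f ≤ ν (‖f‖ • (1 : C(Z, ℝ))) :=
      posMeas_mono hpos fun x => by simpa using le_trans (le_abs_self _) (hb x)
    have hlb : ν ((-‖f‖) • (1 : C(Z, ℝ))) ≤ ν f :=
      posMeas_mono hpos fun x => by simpa using (abs_le.1 (hb x)).1
    rw [posMeas_smul_one, hone, mul_one] at hub
    rw [posMeas_smul_one, hone, mul_one] at hlb
    rw [Real.norm_eq_abs, abs_le]
    exact ⟨hlb, hub⟩
  have hScomp : IsCompact S := by
    refine IsCompact.of_isClosed_subset
      (WeakDual.isCompact_closedBall (0 : StrongDual ℝ C(Z, ℝ)) 1) hSclosed ?_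
    intro ν hν
    simp only [Set.mem_preimage, Metric.mem_closedBall, dist_zero_right]
    exact hSnorm ν hν
  have hSconv : Convex ℝ S := by
    rintro ν ⟨hν, hν1⟩ ρ ⟨hρ, hρ1⟩ a b ha hb hab
    constructor
    · intro f hf
      have e : (a • ν + b • ρ) f = a * ν f + b * ρ f := rfl
      rw [e]
      have := hν f hf; have := hρ f hf
      positivity
    · have e : (a • ν + b • ρ) (1 : C(Z, ℝ)) = a * ν 1 + b * ρ 1 := rfl
      rw [e, hν1, hρ1, mul_one, mul_one, hab]
  set K : Set (VSp Z) := ({(0 : Meas Z)} : Set (Meas Z)) ×ˢ S with hK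
  have hKcomp : IsCompact K := isCompact_singleton.prod hScomp
  have hKconv : Convex ℝ K := (convex_singleton _).prod hSconv
  have hdisj : Disjoint (hatP P) K := by
    rw [Set.disjoint_left]
    rintro p hp ⟨hp1, hp2⟩
    have hmem : p ∈ hatP P ∩ (({0} : Set (Meas Z)) ×ˢ PosMeas Z) := ⟨hp, hp1, hp2.1⟩
    rw [hKP, Set.mem_singleton_iff] at hmem
    have h1 := hp2.2
    rw [hmem] at h1
    simp [meas_zero_apply] at h1
  obtain ⟨f, u, v, hfs, huv, hft⟩ :=
    geometric_hahn_banach_closed_compact hconv isClosed_closure hKconv hKcomp hdisj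
  have hu0 : 0 < u := by
    have := hfs _ h00
    rwa [map_zero] at this
  have hfle : ∀ p ∈ hatP P, f p ≤ 0 := by
    intro p hp
    by_contra hpos
    push_neg at hpos
    have hc : (0 : ℝ) ≤ (u + 1) / f p := le_of_lt (div_pos (by linarith) hpos)
    have hlt := hfs _ (smul_mem_hatP hc hp)
    rw [map_smul, smul_eq_mul, div_mul_cancel₀ _ (ne_of_gt hpos)] at hlt
    linarith
  obtain ⟨η₀, hη₀⟩ := weakDual_dual_eval (f.comp (ContinuousLinearMap.inl ℝ (Meas Z) (Meas Z)))
  obtain ⟨γ, hγ⟩ := weakDual_dual_eval (f.comp (ContinuousLinearMap.inr ℝ (Meas Z) (Meas Z)))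
  have hfdec : ∀ p : VSp Z, f p = p.1 η₀ + p.2 γ := by
    intro p
    have hsplit : p = ((p.1, 0) : VSp Z) + ((0, p.2) : VSp Z) := by
      rw [Prod.mk_add_mk, add_zero, zero_add]
    have h1 := hη₀ p.1
    have h2 := hγ p.2
    rw [ContinuousLinearMap.comp_apply, ContinuousLinearMap.inl_apply] at h1
    rw [ContinuousLinearMap.comp_apply, ContinuousLinearMap.inr_apply] at h2
    calc f p = f ((p.1, 0) : VSp Z) + f ((0, p.2) : VSp Z) := by rw [← map_add, ← hsplit]
    _ = p.1 η₀ + p.2 γ := by rw [← h1, ← h2]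
  have hγv : ∀ z, v < γ z := by
    intro z
    have hd : ((0 : Meas Z), dirac z) ∈ K := ⟨rfl, dirac_posMeas z, rfl⟩
    have := hft _ hd
    rw [hfdec] at this
    simpa [meas_zero_apply, dirac_apply] using this
  have hγpos : ∀ z, 0 < γ z := fun z => lt_trans (lt_trans hu0 huv) (hγv z)
  refine ⟨-η₀, ⟨fun z => (γ z)⁻¹, γ.continuous.inv₀ fun z => (hγpos z).ne'⟩,
    fun z => inv_pos.2 (hγpos z), ?_⟩
  intro β hβ p hp
  have hβγ : β = γ := ContinuousMap.ext fun z => by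
    rw [hβ z]; exact inv_inv (γ z)
  have hple := hfle p (subset_hatP P hp)
  rw [hfdec] at hple
  have hneg : p.1 (-η₀) = -(p.1 η₀) := map_neg p.1 η₀
  rw [hβγ, hneg]
  linarith

end AuxExists
noncomputable section AuxHotter

open Filter Topology

variable {Z : Type*} [TopologicalSpace Z]

/-- If `θ` is hotter than `θ'`, then every Clausius–Duhem temperature scale assigns a
strictly greater temperature to `θ` than to `θ'`. -/
lemma hotter_cd_strict [CompactSpace Z] {P : Set (VSp Z)} (hKP : IsKelvinPlanck P)
    {θ θ' : Z} (hH : HotterState P θ θ') {η T : C(Z, ℝ)} (hcd : IsCDPair P η T) :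
    T θ' < T θ := by
  by_contra hle
  push_neg at hle
  set β := invC T hcd.1 with hβdef
  have hββ : β θ' ≤ β θ := by
    rw [invC_apply, invC_apply]
    exact inv_anti₀ (hcd.1 θ) hle
  set v : VSp Z := ((0 : Meas Z), dirac θ' - dirac θ) with hv
  have h0hat : (0 : VSp Z) ∈ hatP P := kp_zero_mem hKP
  set Q : Set (VSp Z) := {x | ∃ q ∈ hatP P, ∃ c : ℝ, 0 ≤ c ∧ x = q + c • v} with hQdef
  have hQcone : coneOf Q = Q := by
    ext x
    constructor
    · rintro ⟨c, hc, p, ⟨q, hq, d, hd, rfl⟩, rfl⟩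
      refine ⟨c • q, smul_mem_hatP hc hq, c * d, by positivity, ?_⟩
      rw [smul_add, smul_smul]
    · intro hx
      exact ⟨1, zero_le_one, x, hx, (one_smul ℝ x).symm⟩
  have hhatQ : hatP Q = closure Q := by rw [hatP, hQcone]
  have hQconv : Convex ℝ Q := by
    rintro x ⟨q₁, hq₁, c₁, hc₁, rfl⟩ y ⟨q₂, hq₂, c₂, hc₂, rfl⟩ a b ha hb hab
    refine ⟨a • q₁ + b • q₂, hKP.1.2 hq₁ hq₂ ha hb hab, a * c₁ + b * c₂, by positivity, ?_⟩
    rw [smul_add, smul_add, smul_smul, smul_smul, add_smul]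
    abel
  have hQthermo : IsThermoTheory Q := by
    constructor
    · rintro p ⟨q, hq, c, hc, rfl⟩
      have h1 : (q + c • v).1 = q.1 + c • v.1 := rfl
      have h2 : (q + c • v).1 (1 : C(Z, ℝ)) = q.1 1 + c * v.1 1 := rfl
      rw [h2, hatP_mass hKP.1.1 q hq]
      have : v.1 (1 : C(Z, ℝ)) = 0 := rfl
      rw [this, mul_zero, add_zero]
    · rw [hhatQ]
      exact hQconv.closure
  have hPQ : P ⊆ hatP Q := by
    intro p hp
    rw [hhatQ]
    refine subset_closure ⟨p, subset_hatP P hp, 0, le_rfl, by rw [zero_smul, add_zero]⟩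
  have hvQ : v ∈ Q := ⟨0, h0hat, 1, zero_le_one, by rw [one_smul, zero_add]⟩
  have hpass : IsPassiveHT Q (hotnessLevel P θ') (hotnessLevel P θ) := by
    refine ⟨dirac θ', dirac θ, dirac_posMeas _, dirac_posMeas _,
      dirac_suppIn (sameHotness_refl h0hat θ'), dirac_suppIn (sameHotness_refl h0hat θ),
      rfl, ?_, ?_⟩
    · rw [dirac_apply]; norm_num
    · rw [hhatQ]; exact subset_closure hvQ
  have hQineq : ∀ p ∈ Q, p.2 β ≤ p.1 η := by
    rintro p ⟨q, hq, c, hc, rfl⟩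
    have h1 : q.2 β ≤ q.1 η := hcd.hat_le q hq
    have h2 : (q + c • v).2 β = q.2 β + c * (β θ' - β θ) := by
      have e : (q + c • v).2 = q.2 + c • (dirac θ' - dirac θ) := rfl
      rw [e]
      have e2 : (q.2 + c • (dirac θ' - dirac θ)) β = q.2 β + c * (β θ' - β θ) := rfl
      rw [e2]
    have h3 : (q + c • v).1 η = q.1 η + c * 0 := by
      have e : (q + c • v).1 = q.1 + c • (0 : Meas Z) := rfl
      rw [e]
      rfl
    rw [h2, h3, mul_zero, add_zero]
    have h4 : c * (β θ' - β θ) ≤ 0 := mul_nonpos_of_nonneg_of_nonpos hc (by linarith)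
    linarith
  have hQKP : IsKelvinPlanck Q := by
    refine ⟨hQthermo, ?_⟩
    apply Set.eq_singleton_iff_unique_mem.2
    constructor
    · constructor
      · rw [hhatQ]
        have hz : (((0 : Meas Z), (0 : Meas Z)) : VSp Z) = (0 : VSp Z) := rfl
        rw [hz]
        exact subset_closure ⟨0, h0hat, 0, le_rfl, by rw [zero_smul, add_zero]⟩
      · exact ⟨rfl, fun f hf => le_rfl⟩
    · rintro x ⟨hxQ, hx1, hx2⟩
      have hx := hatP_le hQineq x hxQ
      rw [Set.mem_singleton_iff] at hx1
      have hx1' : x.1 η = 0 := by rw [hx1]; rfl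
      rw [hx1'] at hx
      have hx2z : x.2 = 0 :=
        posMeas_zero_of_eval_nonpos hx2 (invC_pos T hcd.1) hx
      exact Prod.ext hx1 hx2z
  exact hH.2 Q hQthermo hPQ hpass hQKP

end AuxHotter
noncomputable section AuxLift

open Filter Topology

variable {Θ X : Type*} [TopologicalSpace Θ] [CompactSpace Θ] [T2Space Θ]
  [TopologicalSpace X] [CompactSpace X] [T2Space X]

lemma IsCDPair.temp_eq_of_hat {Z : Type*} [TopologicalSpace Z] {P : Set (VSp Z)}
    {η T : C(Z, ℝ)} (h : IsCDPair P η T) {a b : Z}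
    (h1 : ((0 : Meas Z), dirac a - dirac b) ∈ hatP P)
    (h2 : ((0 : Meas Z), dirac b - dirac a) ∈ hatP P) : T a = T b := by
  have k1 := h.hat_le _ h1
  have k2 := h.hat_le _ h2
  have e1 : ((0 : Meas Z), dirac a - dirac b).2 (invC T h.1) = (T a)⁻¹ - (T b)⁻¹ := rfl
  have e2 : ((0 : Meas Z), dirac a - dirac b).1 η = 0 := rfl
  have e3 : ((0 : Meas Z), dirac b - dirac a).2 (invC T h.1) = (T b)⁻¹ - (T a)⁻¹ := rfl
  have e4 : ((0 : Meas Z), dirac b - dirac a).1 η = 0 := rfl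
  rw [e1, e2] at k1
  rw [e3, e4] at k2
  exact inv_injective (by linarith)

/-- Restriction of a Clausius–Duhem pair along the thermometer inclusion. -/
lemma cd_restrict {PΘ : Set (VSp Θ)} {PC Pd : Set (VSp (Θ ⊕ X))}
    (hess : EssCont (inlCM Θ X) PΘ PC) (hsub : PC ⊆ hatP Pd)
    {η T : C(Θ ⊕ X, ℝ)} (hcd : IsCDPair Pd η T) :
    IsCDPair PΘ (η.comp (inlCM Θ X)) (T.comp (inlCM Θ X)) := by
  refine ⟨fun θ => hcd.1 _, ?_⟩
  intro β' hβ' p hp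
  have hβ'e : β' = (invC T hcd.1).comp (inlCM Θ X) := ContinuousMap.ext fun θ => hβ' θ
  have hq := hcd.hat_le _ (hsub (essCont_mem hess p hp))
  rw [hβ'e]
  exact hq

/-- Lift of the hotter-than relation from the thermometer to the conjunction. -/
lemma hotter_lift {PΘ : Set (VSp Θ)} {PC : Set (VSp (Θ ⊕ X))}
    (hPΘ : IsKelvinPlanck PΘ) (hKPC : IsKelvinPlanck PC)
    (hess : EssCont (inlCM Θ X) PΘ PC)
    {θa θb : Θ} (hH : HotterState PΘ θa θb)
    (hne : hotnessLevel PC (Sum.inl θa) ≠ hotnessLevel PC (Sum.inl θb)) :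
    HotterState PC (Sum.inl θa) (Sum.inl θb) := by
  refine ⟨hne, ?_⟩
  intro Pd hthermo hsub hpass hKPd
  have hCd : hatP PC ⊆ hatP Pd := hatP_subset hsub
  obtain ⟨η, T, hcd⟩ := exists_cd_of_kp hKPd
  set βC := invC T hcd.1 with hβC
  have hcdΘ : IsCDPair PΘ (η.comp (inlCM Θ X)) (T.comp (inlCM Θ X)) :=
    cd_restrict hess hsub hcd
  have hstrict : T (Sum.inl θb) < T (Sum.inl θa) := hotter_cd_strict hPΘ hH hcdΘ
  obtain ⟨μ, μ', hμ, hμ', hsμ, hsμ', hmass, hmpos, hmem⟩ := hpass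
  have hconst : ∀ (c : Θ ⊕ X), ∀ x ∈ hotnessLevel PC c, βC x = βC c := by
    intro c x hx
    show (T x)⁻¹ = (T c)⁻¹
    rw [hcd.temp_eq_of_hat (hCd hx.2) (hCd hx.1)]
  have hμβ : μ βC = βC (Sum.inl θb) * μ 1 := suppIn_eval hsμ (hconst _)
  have hμ'β : μ' βC = βC (Sum.inl θa) * μ' 1 := suppIn_eval hsμ' (hconst _)
  have hle2 := hcd.hat_le _ hmem
  have e1 : ((0 : Meas (Θ ⊕ X)), μ - μ').2 βC = μ βC - μ' βC := rfl
  have e2 : ((0 : Meas (Θ ⊕ X)), μ - μ').1 η = 0 := rfl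
  rw [e1, e2, hμβ, hμ'β, ← hmass] at hle2
  have hββ : βC (Sum.inl θb) ≤ βC (Sum.inl θa) := by nlinarith
  have hββ' : (T (Sum.inl θb))⁻¹ ≤ (T (Sum.inl θa))⁻¹ := hββ
  have hinv : (T (Sum.inl θa))⁻¹ < (T (Sum.inl θb))⁻¹ :=
    inv_strictAnti₀ (hcd.1 _) hstrict
  linarith

end AuxLift

/-- **Theorem.** Let `(X, P)` be a Kelvin–Planck theory, `(Θ, PΘ)` a thermometer for
it (a Kelvin–Planck theory with totally ordered hotness levels), and let `PC` (on
`Θ ⊕ X`) be a thermometric conjunction of the two.  Then: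
(i) the hotness levels of the conjunction are totally ordered by its hotter-than
relation; in particular, any two states of `X` not of the same hotness in the
conjunction are comparable;
(ii) if the thermometer is ideal, then all Clausius–Duhem temperature scales for the
conjunction are positive multiples of some fixed one, and in particular their
restrictions to `X` differ by at most a positive multiple. -/
theorem thermometric_conjunction_properties
    {Θ X : Type*} [TopologicalSpace Θ] [CompactSpace Θ] [T2Space Θ]
    [TopologicalSpace X] [CompactSpace X] [T2Space X]
    (P : Set (VSp X)) (hP : IsKelvinPlanck P)
    (PΘ : Set (VSp Θ)) (hPΘ : IsKelvinPlanck PΘ)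
    (hord : TotallyOrderedHotness PΘ)
    (PC : Set (VSp (Θ ⊕ X))) (hTC : IsThermometricConjunction PΘ P PC) :
    ((∀ a b : Θ ⊕ X, SameHotness PC a b ∨ HotterState PC a b ∨ HotterState PC b a) ∧
      (∀ σ σ' : X, ¬ SameHotness PC (Sum.inr σ) (Sum.inr σ') →
        HotterState PC (Sum.inr σ) (Sum.inr σ') ∨
          HotterState PC (Sum.inr σ') (Sum.inr σ))) ∧
    ((∃ T₀ : C(Θ, ℝ), IsCDTemp PΘ T₀ ∧
        ∀ T : C(Θ, ℝ), IsCDTemp PΘ T → ∃ α : ℝ, 0 < α ∧ T = α • T₀) →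
      (∃ TC : C(Θ ⊕ X, ℝ), IsCDTemp PC TC ∧
        ∀ T : C(Θ ⊕ X, ℝ), IsCDTemp PC T → ∃ α : ℝ, 0 < α ∧ T = α • TC) ∧
      (∀ T T' : C(Θ ⊕ X, ℝ), IsCDTemp PC T → IsCDTemp PC T' →
        ∃ α : ℝ, 0 < α ∧ ∀ σ : X, T' (Sum.inr σ) = α * T (Sum.inr σ))) := by
  obtain ⟨hKPC, hconj, hmatch⟩ := hTC
  have hconvC : Convex ℝ (hatP PC) := hKPC.1.2
  have h0C : (0 : VSp (Θ ⊕ X)) ∈ hatP PC := kp_zero_mem hKPC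
  have hessΘ : EssCont (inlCM Θ X) PΘ PC := hconj.2.1
  have hmatch' : ∀ a : Θ ⊕ X, ∃ θ : Θ, SameHotness PC a (Sum.inl θ) := by
    intro a
    cases a with
    | inl θ => exact ⟨θ, sameHotness_refl h0C _⟩
    | inr σ => exact hmatch σ
  have hpushSame : ∀ {θ θ' : Θ}, SameHotness PΘ θ θ' →
      SameHotness PC (Sum.inl θ) (Sum.inl θ') := by
    intro θ θ' hs
    have hm := essCont_mem hessΘ
    have key : ∀ a b : Θ, ((0 : Meas Θ), dirac a - dirac b) ∈ hatP PΘ →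
        ((0 : Meas (Θ ⊕ X)), dirac (Sum.inl a) - dirac (Sum.inl b)) ∈ hatP PC := by
      intro a b hab
      have h1 := push_hatP (inlCM Θ X) hm _ hab
      have he : pushV (inlCM Θ X) ((0 : Meas Θ), dirac a - dirac b)
          = ((0 : Meas (Θ ⊕ X)), dirac (Sum.inl a) - dirac (Sum.inl b)) := by
        unfold pushV
        rw [pushM_zero, pushM_sub, pushM_dirac, pushM_dirac]
        rfl
      rwa [he] at h1
    exact ⟨key _ _ hs.1, key _ _ hs.2⟩
  have hcomp : ∀ a b : Θ ⊕ X,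
      SameHotness PC a b ∨ HotterState PC a b ∨ HotterState PC b a := by
    intro a b
    by_cases hs : SameHotness PC a b
    · exact Or.inl hs
    · obtain ⟨θa, hθa⟩ := hmatch' a
      obtain ⟨θb, hθb⟩ := hmatch' b
      have hnsame : ¬ SameHotness PC (Sum.inl θa) (Sum.inl θb) := fun hcon =>
        hs (sameHotness_trans hconvC (sameHotness_trans hconvC hθa hcon) hθb.symm')
      have hlvlne : hotnessLevel PC (Sum.inl θa) ≠ hotnessLevel PC (Sum.inl θb) :=
        fun hcon => hnsame (sameHotness_of_level_eq h0C hcon)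
      have hlvla : hotnessLevel PC a = hotnessLevel PC (Sum.inl θa) :=
        hotnessLevel_eq hconvC hθa
      have hlvlb : hotnessLevel PC b = hotnessLevel PC (Sum.inl θb) :=
        hotnessLevel_eq hconvC hθb
      rcases hord θa θb with hsame | hh | hh
      · exact absurd (hpushSame hsame) hnsame
      · refine Or.inr (Or.inl ?_)
        have hlift := hotter_lift hPΘ hKPC hessΘ hh hlvlne
        show Hotter PC (hotnessLevel PC a) (hotnessLevel PC b)
        rw [hlvla, hlvlb]
        exact hlift
      · refine Or.inr (Or.inr ?_)
        have hlift := hotter_lift hPΘ hKPC hessΘ hh hlvlne.symm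
        show Hotter PC (hotnessLevel PC b) (hotnessLevel PC a)
        rw [hlvla, hlvlb]
        exact hlift
  refine ⟨⟨hcomp, ?_⟩, ?_⟩
  · intro σ σ' hns
    rcases hcomp (Sum.inr σ) (Sum.inr σ') with h | h | h
    · exact absurd h hns
    · exact Or.inl h
    · exact Or.inr h
  · rintro ⟨T₀, hT₀temp, huniq⟩
    obtain ⟨ηC, TC, hcdC⟩ := exists_cd_of_kp hKPC
    have hkey : ∀ T : C(Θ ⊕ X, ℝ), IsCDTemp PC T → ∃ α : ℝ, 0 < α ∧ T = α • TC := by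
      intro T hT
      obtain ⟨η, hcd⟩ := hT
      have h1 : IsCDTemp PΘ (T.comp (inlCM Θ X)) :=
        ⟨_, cd_restrict hessΘ (subset_hatP PC) hcd⟩
      have h2 : IsCDTemp PΘ (TC.comp (inlCM Θ X)) :=
        ⟨_, cd_restrict hessΘ (subset_hatP PC) hcdC⟩
      obtain ⟨α₁, hα₁, he₁⟩ := huniq _ h1
      obtain ⟨α₂, hα₂, he₂⟩ := huniq _ h2
      refine ⟨α₁ / α₂, div_pos hα₁ hα₂, ContinuousMap.ext fun z => ?_⟩
      obtain ⟨θz, hθz⟩ := hmatch' z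
      have hTz : T z = T (Sum.inl θz) := hcd.temp_eq_of_hat hθz.1 hθz.2
      have hTCz : TC z = TC (Sum.inl θz) := hcdC.temp_eq_of_hat hθz.1 hθz.2
      have e1 : T (Sum.inl θz) = α₁ * T₀ θz := by
        have := congrArg (fun F : C(Θ, ℝ) => F θz) he₁
        exact this
      have e2 : TC (Sum.inl θz) = α₂ * T₀ θz := by
        have := congrArg (fun F : C(Θ, ℝ) => F θz) he₂
        exact this
      have hsmul : ((α₁ / α₂) • TC) z = (α₁ / α₂) * TC z := rfl
      rw [hsmul, hTz, hTCz, e1, e2]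
      field_simp
    refine ⟨⟨TC, ⟨ηC, hcdC⟩, hkey⟩, ?_⟩
    intro T T' hT hT'
    obtain ⟨α₁, hα₁, he₁⟩ := hkey T hT
    obtain ⟨α₂, hα₂, he₂⟩ := hkey T' hT'
    refine ⟨α₂ / α₁, div_pos hα₂ hα₁, fun σ => ?_⟩
    have e1 : T (Sum.inr σ) = α₁ * TC (Sum.inr σ) := by rw [he₁]; rfl
    have e2 : T' (Sum.inr σ) = α₂ * TC (Sum.inr σ) := by rw [he₂]; rfl
    rw [e1, e2]
    field_simp
end
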